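/- The function α(c) = (c − √(c²+8))/2 + 4c/(c − √(c²+8))² satisfies α(1) = 0 and α'(c) > 0 for all c > 1; consequently α(c) > 0 for all c > 1. -/

import Mathlib

theorem alpha_properties :
    let α : ℝ → ℝ := fun c =>
      (c - Real.sqrt (c ^ 2 + 8)) / 2 + 4 * c / (c - Real.sqrt (c ^ 2 + 8)) ^ 2
    α 1 = 0 ∧ (∀ c : ℝ, 1 < c → 0 < deriv α c) ∧ ∀ c : ℝ, 1 < c → 0 < α c := by
  intro α
  have hsgt : ∀ c : ℝ, c < Real.sqrt (c ^ 2 + 8) := by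
    intro c
    have h1 : c ≤ Real.sqrt (c ^ 2) := by
      rw [Real.sqrt_sq_eq_abs]; exact le_abs_self c
    have h2 : Real.sqrt (c ^ 2) < Real.sqrt (c ^ 2 + 8) :=
      Real.sqrt_lt_sqrt (by positivity) (by linarith)
    linarith
  have hs0 : ∀ c : ℝ, 0 < Real.sqrt (c ^ 2 + 8) := by
    intro c; exact Real.sqrt_pos.mpr (by positivity)
  have hssq : ∀ c : ℝ, Real.sqrt (c ^ 2 + 8) ^ 2 = c ^ 2 + 8 := by
    intro c; exact Real.sq_sqrt (by positivity)
  set D : ℝ → ℝ := fun c =>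
    (1 - c / Real.sqrt (c ^ 2 + 8)) / 2 +
      (4 * (c - Real.sqrt (c ^ 2 + 8)) ^ 2 -
        4 * c * (2 * (c - Real.sqrt (c ^ 2 + 8)) ^ 1 * (1 - c / Real.sqrt (c ^ 2 + 8)))) /
        ((c - Real.sqrt (c ^ 2 + 8)) ^ 2) ^ 2 with hD
  have hd : ∀ c : ℝ, HasDerivAt α (D c) c := by
    intro c
    have hbase : HasDerivAt (fun x : ℝ => x ^ 2 + 8) (2 * c) c := by
      have := (hasDerivAt_pow 2 c).add_const (8 : ℝ)
      simpa using this
    have hsqrt : HasDerivAt (fun x : ℝ => Real.sqrt (x ^ 2 + 8)) (c / Real.sqrt (c ^ 2 + 8)) c := by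
      have := (Real.hasDerivAt_sqrt (x := c ^ 2 + 8) (by positivity)).comp c hbase
      convert this using 1
      · rfl
      · rfl
      · rfl
      field_simp
    have hu : HasDerivAt (fun x : ℝ => x - Real.sqrt (x ^ 2 + 8))
        (1 - c / Real.sqrt (c ^ 2 + 8)) c := (hasDerivAt_id c).sub hsqrt
    have hfirst : HasDerivAt (fun x : ℝ => (x - Real.sqrt (x ^ 2 + 8)) / 2)
        ((1 - c / Real.sqrt (c ^ 2 + 8)) / 2) c := hu.div_const 2
    have hnum : HasDerivAt (fun x : ℝ => 4 * x) (4 : ℝ) c := by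
      simpa using (hasDerivAt_id c).const_mul (4 : ℝ)
    have hden : HasDerivAt (fun x : ℝ => (x - Real.sqrt (x ^ 2 + 8)) ^ 2)
        (2 * (c - Real.sqrt (c ^ 2 + 8)) ^ 1 * (1 - c / Real.sqrt (c ^ 2 + 8))) c := hu.pow 2
    have hdne : (c - Real.sqrt (c ^ 2 + 8)) ^ 2 ≠ 0 :=
      pow_ne_zero 2 (sub_ne_zero.mpr (ne_of_lt (hsgt c)))
    have hfrac := hnum.div hden hdne
    exact hfirst.add hfrac
  have hDpos : ∀ c : ℝ, 1 < c → 0 < D c := by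
    intro c hc
    set s := Real.sqrt (c ^ 2 + 8) with hsdef
    have h1 : c < s := hsgt c
    have h2 : 0 < s := hs0 c
    have hune : c - s ≠ 0 := by intro h; linarith [sub_eq_zero.mp h]
    have key : D c = (s - c) / (2 * s) + 4 / (c - s) ^ 2 + 8 * c / (s * (c - s) ^ 2) := by
      rw [hD]
      beta_reduce
      rw [← hsdef]
      field_simp
      ring
    rw [key]
    have t1 : 0 < (s - c) / (2 * s) := div_pos (by linarith) (by linarith)
    have t2 : 0 < 4 / (c - s) ^ 2 := div_pos (by norm_num) (by positivity)
    have t3 : 0 < 8 * c / (s * (c - s) ^ 2) := div_pos (by linarith) (by positivity)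
    linarith
  have h10 : α 1 = 0 := by
    show (1 - Real.sqrt ((1:ℝ) ^ 2 + 8)) / 2 + 4 * 1 / (1 - Real.sqrt ((1:ℝ) ^ 2 + 8)) ^ 2 = 0
    have h9 : Real.sqrt ((1:ℝ) ^ 2 + 8) = 3 := by
      rw [show (1:ℝ) ^ 2 + 8 = 3 ^ 2 by norm_num, Real.sqrt_sq (by norm_num)]
    rw [h9]; norm_num
  refine ⟨h10, fun c hc => ?_, fun c hc => ?_⟩
  · rw [(hd c).deriv]; exact hDpos c hc
  · have hmono : StrictMonoOn α (Set.Ici 1) := by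
      apply strictMonoOn_of_deriv_pos (convex_Ici 1)
      · exact fun x _ => (hd x).differentiableAt.continuousAt.continuousWithinAt
      · intro x hx
        rw [interior_Ici] at hx
        rw [(hd x).deriv]
        exact hDpos x hx
    have := hmono (Set.self_mem_Ici) (Set.mem_Ici.mpr hc.le) hc
    rwa [h10] at this
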